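/- For all m ≥ −1, K_{m+2} = K_m K_{m+1} with the last letter δ_m replaced by δ_{m+1}; equivalently, K_{m+2} equals K_m concatenated with K_{m+1} where the final letter of K_{m+1} (which is δ_m) is changed to δ_{m+1}. Symmetrically, K_{m+2} equals K_{m+1} K_m with the first letter of K_{m+1} (which is δ_m) changed to δ_{m+1}. -/

import Mathlib

/-- Finite Fibonacci words, shifted: `FwS 0 = F₋₁ = b`, `FwS (m+1) = F_m`
(`F₀ = a`, `F₁ = ab`, `F_{m+1} = F_m F_{m-1}`), letters `a = false`, `b = true`. -/
def FwS : ℕ → List Bool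
  | 0 => [true]
  | 1 => [false]
  | n + 2 => FwS (n + 1) ++ FwS n

/-- `del n` is the letter `δ_n` (the last letter of `F_n`): `a` iff `n` is even. -/
def del (n : ℕ) : Bool := if Even n then false else true

/-- `singK n = K_{n-1}`, the `(n-1)`-st singular word (so `n` ranges over `ℕ`
as the paper's index ranges over `m ≥ -1`):
`K_m = δ_{m+1} · F_m[1, f_m − 1]`. -/
def singK (n : ℕ) : List Bool := del n :: (FwS n).dropLast

lemma del_add_two (n : ℕ) : del (n + 2) = del n := by
  simp [del, Nat.even_add_one, Nat.even_add]

lemma fws_ne : ∀ n, FwS n ≠ []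
  | 0 => by simp [FwS]
  | 1 => by simp [FwS]
  | n + 2 => by simp [FwS, fws_ne (n + 1)]

lemma fwComm : ∀ n, ∃ P, FwS (n + 2) = P ++ [del n, del (n + 1)] ∧
    FwS n ++ FwS (n + 1) = P ++ [del (n + 1), del n]
  | 0 => ⟨[], by norm_num [FwS, del], by norm_num [FwS, del]⟩
  | n + 1 => by
    obtain ⟨P, h1, h2⟩ := fwComm n
    refine ⟨FwS (n + 1) ++ P, ?_, ?_⟩
    · show FwS (n + 2) ++ FwS (n + 1) = _
      rw [show FwS (n + 2) = FwS (n + 1) ++ FwS n from rfl, List.append_assoc, h2,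
        del_add_two]
      simp
    · rw [show FwS (n + 2) = FwS (n + 1) ++ FwS n from rfl, ← List.append_assoc,
        List.append_assoc (FwS (n+1)), ← show FwS (n + 2) = FwS (n + 1) ++ FwS n from rfl,
        h1, del_add_two]
      simp

lemma fws_getLast (n : ℕ) : FwS n = (FwS n).dropLast ++ [del (n + 1)] := by
  match n with
  | 0 => norm_num [FwS, del]
  | 1 => norm_num [FwS, del]
  | m + 2 =>
    obtain ⟨P, h1, _⟩ := fwComm m
    rw [h1, del_add_two,
      show P ++ [del m, del (m+1)] = (P ++ [del m]) ++ [del (m+1)] by simp,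
      List.dropLast_concat]

/-- For all `m ≥ -1` (here `n = m + 1`):
`K_{m+2}` is `K_m K_{m+1}` with the last letter of `K_{m+1}` (which is `δ_m`)
changed to `δ_{m+1}`, and symmetrically `K_{m+2}` is `K_{m+1} K_m` with the
first letter of `K_{m+1}` (which is `δ_m`) changed to `δ_{m+1}`. -/
theorem stmt_7 (n : ℕ) :
    (singK (n + 1)).getLast? = some (del (n + 1)) ∧
    (singK (n + 1)).head? = some (del (n + 1)) ∧
    singK (n + 2) = singK n ++ ((singK (n + 1)).dropLast ++ [del n]) ∧
    singK (n + 2) = del n :: ((singK (n + 1)).tail ++ singK n) := by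
  refine ⟨?_, rfl, ?_, ?_⟩
  · match n with
    | 0 => decide
    | m + 1 =>
      obtain ⟨P, h1, _⟩ := fwComm m
      show (del (m+2) :: (FwS (m+2)).dropLast).getLast? = _
      rw [h1,
        show P ++ [del m, del (m+1)] = (P ++ [del m]) ++ [del (m+1)] by simp,
        List.dropLast_concat, del_add_two, ← List.cons_append, List.getLast?_concat]
  · match n with
    | 0 => decide
    | m + 1 =>
      obtain ⟨P, h1, h2⟩ := fwComm m
      show del (m+3) :: (FwS (m+3)).dropLast =
        (del (m+1) :: (FwS (m+1)).dropLast) ++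
          ((del (m+2) :: (FwS (m+2)).dropLast).dropLast ++ [del (m+1)])
      have hd2 : (FwS (m+2)).dropLast = P ++ [del m] := by
        rw [h1, show P ++ [del m, del (m+1)] = (P ++ [del m]) ++ [del (m+1)] by simp,
          List.dropLast_concat]
      have hd3 : (FwS (m+3)).dropLast = FwS (m+2) ++ (FwS (m+1)).dropLast := by
        rw [show FwS (m+3) = FwS (m+2) ++ FwS (m+1) from rfl,
          List.dropLast_append_of_ne_nil (fws_ne _)]
      have hP : P ++ [del (m+1)] = FwS m ++ (FwS (m+1)).dropLast := by
        have := congrArg List.dropLast h2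
        rw [List.dropLast_append_of_ne_nil (fws_ne _),
          show P ++ [del (m+1), del m] = (P ++ [del (m+1)]) ++ [del m] by simp,
          List.dropLast_concat] at this
        exact this.symm
      rw [hd2, hd3]
      simp only [del_add_two, show del (m+3) = del (m+1) from del_add_two (m+1)]
      rw [show del m :: (P ++ [del m]) = (del m :: P) ++ [del m] from rfl,
        List.dropLast_concat]
      congr 1
      calc FwS (m+2) ++ (FwS (m+1)).dropLast
          = (FwS (m+1) ++ FwS m) ++ (FwS (m+1)).dropLast := rfl
        _ = ((FwS (m+1)).dropLast ++ [del m]) ++ (FwS m ++ (FwS (m+1)).dropLast) := by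
            conv_lhs => rw [fws_getLast (m+1), del_add_two]
            simp
        _ = ((FwS (m+1)).dropLast ++ [del m]) ++ (P ++ [del (m+1)]) := by rw [hP]
        _ = (FwS (m+1)).dropLast ++ ((del m :: P) ++ [del (m+1)]) := by simp
  · -- part 4
    show del (n+2) :: (FwS (n+2)).dropLast =
      del n :: ((FwS (n+1)).dropLast ++ (del n :: (FwS n).dropLast))
    rw [del_add_two]
    congr 1
    rw [show FwS (n+2) = FwS (n+1) ++ FwS n from rfl,
      List.dropLast_append_of_ne_nil (fws_ne _)]
    conv_lhs => rw [fws_getLast (n+1), del_add_two]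
    simp
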